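/- Let X be a compact subset of ℂⁿ and let g be a continuous function on X that is a uniform limit of polynomials on X (i.e., g ∈ P(X)), such that the uniform algebra P(g(X)) equals C(g(X)). Then X is polynomially convex if and only if each fiber g⁻¹(t), t ∈ ℂ, is polynomially convex. -/

import Mathlib

open MvPolynomial

/-- The polynomially convex hull of a set `X ⊆ ℂⁿ`. -/
noncomputable def polyHull (n : ℕ) (X : Set (Fin n → ℂ)) : Set (Fin n → ℂ) :=
  {z | ∀ p : MvPolynomial (Fin n) ℂ, ‖eval z p‖ ≤ sSup ((fun x => ‖eval x p‖) '' X)}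

/-- `X` is polynomially convex when it equals its polynomially convex hull. -/
def IsPolyConvex (n : ℕ) (X : Set (Fin n → ℂ)) : Prop := polyHull n X = X

/-- `P(X)`: the uniform closure in `C(X)` of the holomorphic polynomials restricted to `X`. -/
noncomputable def polyAlg (n : ℕ) (X : Set (Fin n → ℂ)) : Set C(X, ℂ) :=
  closure {f : C(X, ℂ) | ∃ p : MvPolynomial (Fin n) ℂ, ∀ x : X, f x = eval (x : Fin n → ℂ) p}

/-- `P(Y)` for a compact subset `Y ⊆ ℂ`. -/
noncomputable def polyAlg1 (Y : Set ℂ) : Set C(Y, ℂ) :=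
  closure {f : C(Y, ℂ) | ∃ p : Polynomial ℂ, ∀ y : Y, f y = p.eval (y : ℂ)}

lemma polyHull_empty (n : ℕ) : polyHull n (∅ : Set (Fin n → ℂ)) = ∅ := by
  ext z
  simp only [polyHull, Set.mem_setOf_eq, Set.image_empty, Real.sSup_empty,
    Set.mem_empty_iff_false, iff_false]
  intro h
  have := h 1
  rw [map_one] at this
  norm_num at this

lemma bddAbove_norm_image (n : ℕ) (K : Set (Fin n → ℂ)) (hK : IsCompact K)
    (p : MvPolynomial (Fin n) ℂ) : BddAbove ((fun x => ‖eval x p‖) '' K) :=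
  hK.bddAbove_image ((continuous_norm.comp (MvPolynomial.continuous_eval p)).continuousOn)

lemma subset_polyHull (n : ℕ) (K : Set (Fin n → ℂ)) (hK : IsCompact K) :
    K ⊆ polyHull n K := fun x hx p =>
  le_csSup (bddAbove_norm_image n K hK p) ⟨x, hx, rfl⟩

lemma eval_aeval (n : ℕ) (z : Fin n → ℂ) (P : MvPolynomial (Fin n) ℂ) (q : Polynomial ℂ) :
    eval z (Polynomial.aeval P q) = q.eval (eval z P) := by
  rw [Polynomial.aeval_def, Polynomial.hom_eval₂]
  have h : (MvPolynomial.eval z).comp (algebraMap ℂ (MvPolynomial (Fin n) ℂ)) = RingHom.id ℂ := by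
    ext c; simp
  rw [h]
  rfl

lemma norm_le_aux (a b : ℂ) : ‖a‖ ≤ ‖b‖ + ‖a - b‖ := by
  calc ‖a‖ = ‖b + (a - b)‖ := by ring_nf
    _ ≤ ‖b‖ + ‖a - b‖ := norm_add_le _ _


set_option maxHeartbeats 2000000 in
theorem stmt0 (n : ℕ) (X : Set (Fin n → ℂ)) (hX : IsCompact X)
    (g : C(X, ℂ)) (hg : g ∈ polyAlg n X)
    (hgX : polyAlg1 (Set.range g) = Set.univ) :
    IsPolyConvex n X ↔
      ∀ t : ℂ, IsPolyConvex n (Subtype.val '' (g ⁻¹' {t})) := by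
  rcases Set.eq_empty_or_nonempty X with hXe | hXne
  · subst hXe
    have hfib : ∀ t : ℂ, Subtype.val '' (g ⁻¹' {t}) = (∅ : Set (Fin n → ℂ)) := by
      intro t
      apply Set.eq_empty_of_forall_notMem
      rintro z ⟨⟨x, hx⟩, -, -⟩
      exact hx
    constructor
    · intro _ t
      rw [IsPolyConvex, hfib t, polyHull_empty]
    · intro _
      rw [IsPolyConvex, polyHull_empty]
  · haveI : CompactSpace X := isCompact_iff_compactSpace.mp hX
    obtain ⟨x₀X, hx₀X⟩ := hXne
    -- extract approximating polynomial sequence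
    have hPex : ∀ k : ℕ, ∃ p : MvPolynomial (Fin n) ℂ,
        ∀ x : X, ‖g x - eval (x : Fin n → ℂ) p‖ ≤ 1 / (k + 1) := by
      intro k
      have hk : (0:ℝ) < 1 / (k + 1) := by positivity
      rcases Metric.mem_closure_iff.mp hg _ hk with ⟨f, ⟨p, hp⟩, hdist⟩
      refine ⟨p, fun x => ?_⟩
      have h1 : dist (g x) (f x) ≤ dist g f := ContinuousMap.dist_apply_le_dist x
      rw [hp x] at h1
      rw [← dist_eq_norm]
      exact h1.trans hdist.le
    choose P hP using hPex
    have hXfib : ∀ t : ℂ, Subtype.val '' (g ⁻¹' {t}) ⊆ X := by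
      rintro t z ⟨⟨x, hx⟩, -, rfl⟩
      exact hx
    have hfibc : ∀ t : ℂ, IsCompact (Subtype.val '' (g ⁻¹' {t})) := fun t =>
      ((isClosed_singleton.preimage g.continuous).isCompact).image continuous_subtype_val
    constructor
    · -- forward direction
      intro hconv t
      apply subset_antisymm _ (subset_polyHull n _ (hfibc t))
      intro z hz
      rcases Set.eq_empty_or_nonempty (Subtype.val '' (g ⁻¹' {t})) with hFe | hFne
      · rw [hFe, polyHull_empty] at hz
        exact absurd hz (Set.notMem_empty z)
      · have hzX : z ∈ X := by
          rw [← hconv]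
          intro p
          exact (hz p).trans (csSup_le_csSup (bddAbove_norm_image n X hX p)
            (hFne.image _) (Set.image_mono (hXfib t)))
        have hgz : g ⟨z, hzX⟩ = t := by
          have key : ∀ k : ℕ, ‖g ⟨z, hzX⟩ - t‖ ≤ 2 / (k + 1) := by
            intro k
            have h1 : ‖g ⟨z, hzX⟩ - eval z (P k)‖ ≤ 1 / (k + 1) := hP k ⟨z, hzX⟩
            have h2 : ‖eval z (P k) - t‖ ≤ 1 / (k + 1) := by
              have h3 := hz (P k - C t)
              rw [map_sub] at h3
              have h4 : sSup ((fun x => ‖eval x (P k - C t)‖) '' (Subtype.val '' (g ⁻¹' {t})))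
                  ≤ 1 / (k + 1) := by
                apply csSup_le (hFne.image _)
                rintro r ⟨x, ⟨⟨x', hx'⟩, hgx', rfl⟩, rfl⟩
                simp only [Set.mem_preimage, Set.mem_singleton_iff] at hgx'
                show ‖eval x' (P k - C t)‖ ≤ 1 / (k + 1)
                rw [map_sub, eval_C, ← hgx', norm_sub_rev]
                exact hP k ⟨x', hx'⟩
              simpa [eval_C] using h3.trans h4
            calc ‖g ⟨z, hzX⟩ - t‖ ≤ ‖g ⟨z, hzX⟩ - eval z (P k)‖ + ‖eval z (P k) - t‖ :=
                  norm_sub_le_norm_sub_add_norm_sub _ _ _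
              _ ≤ 1 / (k + 1) + 1 / (k + 1) := add_le_add h1 h2
              _ = 2 / (k + 1) := by ring
          have h0 : ‖g ⟨z, hzX⟩ - t‖ ≤ 0 := by
            refine le_of_forall_pos_le_add (fun ε hε => ?_)
            obtain ⟨k, hk⟩ := exists_nat_gt (2 / ε)
            have hk1 : (2:ℝ) / (k + 1) < ε := by
              rw [div_lt_iff₀ (by positivity)]
              have h5 : 2 / ε < (k:ℝ) + 1 := hk.trans (by linarith)
              calc (2:ℝ) = ε * (2 / ε) := by field_simp
                _ < ε * ((k:ℝ) + 1) := mul_lt_mul_of_pos_left h5 hε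
                _ = ε * (↑k + 1) := rfl
            linarith [key k]
          exact sub_eq_zero.mp (norm_le_zero_iff.mp h0)
        exact ⟨⟨z, hzX⟩, hgz, rfl⟩
    · -- backward direction
      intro hfib
      apply Set.Subset.antisymm _ (subset_polyHull n X hX)
      intro z hz
      -- the sequence eval z (P k) is Cauchy
      have hone : Filter.Tendsto (fun k : ℕ => 1/((k:ℝ)+1)) Filter.atTop (nhds 0) :=
        tendsto_one_div_add_atTop_nhds_zero_nat
      have hb0 : Filter.Tendsto (fun N : ℕ => 2 / ((N:ℝ) + 1)) Filter.atTop (nhds 0) := by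
        have h2 := hone.const_mul (2:ℝ)
        simp only [mul_zero] at h2
        convert h2 using 2 with N
        ring
      have hcauchy : CauchySeq (fun k => eval z (P k)) := by
        refine cauchySeq_of_le_tendsto_0 (fun N : ℕ => 2 / ((N:ℝ)+1))
          (fun m k N hm hk => ?_) hb0
        rw [dist_eq_norm, ← map_sub]
        refine (hz (P m - P k)).trans ?_
        apply csSup_le ((Set.nonempty_of_mem hx₀X).image _)
        rintro r ⟨x, hx, rfl⟩
        show ‖eval x (P m - P k)‖ ≤ 2 / ((N:ℝ)+1)
        have hmN : 1/((m:ℝ)+1) ≤ 1/((N:ℝ)+1) := by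
          apply one_div_le_one_div_of_le (by positivity)
          have := (Nat.cast_le (α := ℝ)).mpr hm
          linarith
        have hkN : 1/((k:ℝ)+1) ≤ 1/((N:ℝ)+1) := by
          apply one_div_le_one_div_of_le (by positivity)
          have := (Nat.cast_le (α := ℝ)).mpr hk
          linarith
        have h1 : ‖eval x (P m) - g ⟨x, hx⟩‖ ≤ 1/((m:ℝ)+1) := by
          rw [norm_sub_rev]; exact hP m ⟨x, hx⟩
        have h2 : ‖g ⟨x, hx⟩ - eval x (P k)‖ ≤ 1/((k:ℝ)+1) := hP k ⟨x, hx⟩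
        calc ‖eval x (P m - P k)‖
            = ‖(eval x (P m) - g ⟨x, hx⟩) + (g ⟨x, hx⟩ - eval x (P k))‖ := by
              rw [map_sub]; ring_nf
          _ ≤ ‖eval x (P m) - g ⟨x, hx⟩‖ + ‖g ⟨x, hx⟩ - eval x (P k)‖ := norm_add_le _ _
          _ ≤ 1/((N:ℝ)+1) + 1/((N:ℝ)+1) := add_le_add (h1.trans hmN) (h2.trans hkN)
          _ = 2/((N:ℝ)+1) := by ring
      obtain ⟨t, ht⟩ := cauchySeq_tendsto_of_complete hcauchy
      -- key bound lemma
      have keyB : ∀ (p : MvPolynomial (Fin n) ℂ) (q : Polynomial ℂ) (Cb : ℝ),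
          (∀ x : X, ‖eval (x : Fin n → ℂ) p‖ * ‖q.eval (g x)‖ ≤ Cb) →
          ‖eval z p‖ * ‖q.eval t‖ ≤ Cb := by
        intro p q Cb hCb
        have hYc : IsCompact (Set.range g) := isCompact_range g.continuous
        have hDc : IsCompact (Metric.cthickening 1 (Set.range g)) := hYc.cthickening
        have hquc : UniformContinuousOn (fun w => q.eval w) (Metric.cthickening 1 (Set.range g)) :=
          hDc.uniformContinuousOn_of_continuous q.continuous.continuousOn
        set N := sSup ((fun x => ‖eval x p‖) '' X) with hN
        have hNx : ∀ x : X, ‖eval (x : Fin n → ℂ) p‖ ≤ N := fun x =>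
          le_csSup (bddAbove_norm_image n X hX p) ⟨x, x.2, rfl⟩
        have hNz : ‖eval z p‖ ≤ N := hz p
        have hN0 : 0 ≤ N := (norm_nonneg _).trans (hNx ⟨x₀X, hx₀X⟩)
        refine le_of_forall_pos_le_add (fun ε hε => ?_)
        set η := ε / (2 * (N + 1)) with hη
        have hη0 : 0 < η := by positivity
        obtain ⟨δ, hδ0, hδ⟩ := Metric.uniformContinuousOn_iff.mp hquc η hη0
        have h1k : ∀ᶠ k in Filter.atTop, dist (q.eval (eval z (P k))) (q.eval t) < η := by
          have htq : Filter.Tendsto (fun k => q.eval (eval z (P k))) Filter.atTop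
              (nhds (q.eval t)) := (q.continuous.tendsto t).comp ht
          exact Metric.tendsto_nhds.mp htq η hη0
        have h2k : ∀ᶠ k : ℕ in Filter.atTop, 1 / ((k:ℝ)+1) < δ := hone.eventually_lt_const hδ0
        obtain ⟨k, hk1, hk2⟩ := (h1k.and h2k).exists
        have hgD : ∀ x : X, g x ∈ Metric.cthickening 1 (Set.range g) := fun x =>
          Metric.self_subset_cthickening _ (Set.mem_range_self x)
        have hPD : ∀ x : X, eval (x : Fin n → ℂ) (P k) ∈ Metric.cthickening 1 (Set.range g) := by
          intro x
          refine Metric.mem_cthickening_of_dist_le _ (g x) 1 _ (Set.mem_range_self x) ?_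
          rw [dist_eq_norm, norm_sub_rev]
          refine (hP k x).trans ?_
          rw [div_le_one (by positivity)]
          have : (0:ℝ) ≤ k := Nat.cast_nonneg k
          linarith
        have hsup : sSup ((fun x => ‖eval x (p * Polynomial.aeval (P k) q)‖) '' X)
            ≤ Cb + N * η := by
          apply csSup_le ((Set.nonempty_of_mem hx₀X).image _)
          rintro r ⟨x, hx, rfl⟩
          show ‖eval x (p * Polynomial.aeval (P k) q)‖ ≤ Cb + N * η
          rw [map_mul, eval_aeval, norm_mul]
          have hd : dist (q.eval (eval x (P k))) (q.eval (g ⟨x, hx⟩)) < η := by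
            apply hδ _ (hPD ⟨x, hx⟩) _ (hgD ⟨x, hx⟩)
            rw [dist_eq_norm, norm_sub_rev]
            exact lt_of_le_of_lt (hP k ⟨x, hx⟩) hk2
          have hqb : ‖q.eval (eval x (P k))‖ ≤ ‖q.eval (g ⟨x, hx⟩)‖ + η := by
            have := norm_le_aux (q.eval (eval x (P k))) (q.eval (g ⟨x, hx⟩))
            rw [← dist_eq_norm] at this
            linarith [hd.le]
          calc ‖eval x p‖ * ‖q.eval (eval x (P k))‖
              ≤ ‖eval x p‖ * (‖q.eval (g ⟨x, hx⟩)‖ + η) :=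
                mul_le_mul_of_nonneg_left hqb (norm_nonneg _)
            _ = ‖eval x p‖ * ‖q.eval (g ⟨x, hx⟩)‖ + ‖eval x p‖ * η := mul_add _ _ _
            _ ≤ Cb + N * η := add_le_add (hCb ⟨x, hx⟩)
                (mul_le_mul_of_nonneg_right (hNx ⟨x, hx⟩) hη0.le)
        have hzk : ‖eval z p‖ * ‖q.eval (eval z (P k))‖ ≤ Cb + N * η := by
          have h5 := hz (p * Polynomial.aeval (P k) q)
          rw [map_mul, eval_aeval, norm_mul] at h5
          exact h5.trans hsup
        have h6 : ‖q.eval t‖ ≤ ‖q.eval (eval z (P k))‖ + η := by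
          have := norm_le_aux (q.eval t) (q.eval (eval z (P k)))
          rw [← dist_eq_norm, dist_comm] at this
          linarith [hk1.le]
        have hfinal : ‖eval z p‖ * ‖q.eval t‖ ≤ Cb + N * η + N * η := by
          calc ‖eval z p‖ * ‖q.eval t‖
              ≤ ‖eval z p‖ * (‖q.eval (eval z (P k))‖ + η) :=
                mul_le_mul_of_nonneg_left h6 (norm_nonneg _)
            _ = ‖eval z p‖ * ‖q.eval (eval z (P k))‖ + ‖eval z p‖ * η := mul_add _ _ _
            _ ≤ Cb + N * η + N * η := add_le_add hzk
                (mul_le_mul_of_nonneg_right hNz hη0.le)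
        have hηε : N * η + N * η ≤ ε := by
          have hηeq : η * (2 * (N + 1)) = ε := by
            rw [hη]; field_simp
          nlinarith [hη0.le]
        linarith
      by_cases htY : t ∈ Set.range g
      · -- t is a value of g : z lies in the hull of the fiber over t
        obtain ⟨xt, hxt⟩ := htY
        have hFne : (Subtype.val '' (g ⁻¹' {t})).Nonempty :=
          ⟨(xt : Fin n → ℂ), xt, by simp [hxt], rfl⟩
        have hzF : z ∈ polyHull n (Subtype.val '' (g ⁻¹' {t})) := by
          intro p
          set F := Subtype.val '' (g ⁻¹' {t}) with hF
          set M := sSup ((fun x => ‖eval x p‖) '' F) with hM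
          have hMF : ∀ x ∈ F, ‖eval x p‖ ≤ M := fun x hx =>
            le_csSup (bddAbove_norm_image n F (hfibc t) p) ⟨x, hx, rfl⟩
          have hM0 : 0 ≤ M := (norm_nonneg _).trans (hMF _ hFne.some_mem)
          set N := sSup ((fun x => ‖eval x p‖) '' X) with hN
          have hNx : ∀ x : X, ‖eval (x : Fin n → ℂ) p‖ ≤ N := fun x =>
            le_csSup (bddAbove_norm_image n X hX p) ⟨x, x.2, rfl⟩
          have hNz : ‖eval z p‖ ≤ N := hz p
          have hN0 : 0 ≤ N := (norm_nonneg _).trans (hNx ⟨x₀X, hx₀X⟩)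
          refine le_of_forall_pos_le_add (fun ε hε => ?_)
          -- choose δ
          obtain ⟨δ, hδ0, hδ⟩ : ∃ δ > 0, ∀ x : X, ‖g x - t‖ < δ → ‖eval (x : Fin n → ℂ) p‖ ≤ M + ε/2 := by
            by_cases hK : {x : X | M + ε/2 ≤ ‖eval (x : Fin n → ℂ) p‖}.Nonempty
            · have hKcl : IsClosed {x : X | M + ε/2 ≤ ‖eval (x : Fin n → ℂ) p‖} :=
                isClosed_le continuous_const
                  (continuous_norm.comp ((MvPolynomial.continuous_eval p).comp continuous_subtype_val))
              have hφ : Continuous fun x : X => ‖g x - t‖ := (g.continuous.sub continuous_const).norm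
              obtain ⟨x₁, hx₁K, hx₁min⟩ := hKcl.isCompact.exists_isMinOn hK hφ.continuousOn
              refine ⟨‖g x₁ - t‖, ?_, ?_⟩
              · rcases eq_or_ne (g x₁) t with he | hne
                · exfalso
                  have h1 : (↑x₁ : Fin n → ℂ) ∈ Subtype.val '' (g ⁻¹' {t}) := ⟨x₁, by simp [he], rfl⟩
                  have h2 := hMF _ h1
                  have h3 : M + ε/2 ≤ ‖eval (↑x₁ : Fin n → ℂ) p‖ := hx₁K
                  linarith
                · simpa [sub_ne_zero] using hne
              · intro x hx
                by_contra hcon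
                push_neg at hcon
                have hxK : x ∈ {x : X | M + ε/2 ≤ ‖eval (x : Fin n → ℂ) p‖} := hcon.le
                exact absurd hx (not_lt.mpr (hx₁min hxK))
            · refine ⟨1, one_pos, fun x _ => ?_⟩
              by_contra hcon
              push_neg at hcon
              exact hK ⟨x, hcon.le⟩
          -- choose ε'
          set ε' := min (1/2 : ℝ) (ε / (8 * (M + N + ε + 1))) with hε'
          have hε'0 : 0 < ε' := lt_min (by norm_num) (by positivity)
          have hε'half : ε' ≤ 1/2 := min_le_left _ _
          have hε'small : ε' ≤ ε / (8 * (M + N + ε + 1)) := min_le_right _ _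
          -- the bump function on Y = range g
          haveI : CompactSpace (Set.range g) :=
            isCompact_iff_compactSpace.mp (isCompact_range g.continuous)
          set h : C(Set.range g, ℂ) :=
            ⟨fun y => ((max 0 (1 - ‖(y : ℂ) - t‖/δ) : ℝ) : ℂ),
              Complex.continuous_ofReal.comp (continuous_const.max
                (continuous_const.sub
                  (((continuous_subtype_val.sub continuous_const).norm).div_const δ)))⟩ with hh
          have hhY : h ∈ polyAlg1 (Set.range g) := by rw [hgX]; trivial
          obtain ⟨f, ⟨q, hq⟩, hdist⟩ := Metric.mem_closure_iff.mp hhY ε' hε'0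
          have hqy : ∀ y : Set.range g, ‖h y - q.eval (y : ℂ)‖ < ε' := by
            intro y
            have h1 : dist (h y) (f y) ≤ dist h f := ContinuousMap.dist_apply_le_dist y
            rw [hq y] at h1
            rw [← dist_eq_norm]
            exact h1.trans_lt hdist
          have htY' : t ∈ Set.range g := ⟨xt, hxt⟩
          have hht : h ⟨t, htY'⟩ = 1 := by
            simp [hh]
          have hqt : 1 - ε' ≤ ‖q.eval t‖ := by
            have h1 := hqy ⟨t, htY'⟩
            rw [hht] at h1
            have h2 : ‖(1 : ℂ)‖ - ‖q.eval t‖ ≤ ‖(1 : ℂ) - q.eval t‖ := norm_sub_norm_le _ _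
            rw [norm_one] at h2
            have h3 : ‖(1 : ℂ) - q.eval ((⟨t, htY'⟩ : Set.range g) : ℂ)‖ < ε' := h1
            have h4 : ((⟨t, htY'⟩ : Set.range g) : ℂ) = t := rfl
            rw [h4] at h3
            linarith
          -- the bound Cb
          have hCb : ∀ x : X, ‖eval (x : Fin n → ℂ) p‖ * ‖q.eval (g x)‖ ≤
              (M + ε/2) * (1 + ε') + N * ε' := by
            intro x
            have hy : g x ∈ Set.range g := Set.mem_range_self x
            have hqx : ‖h ⟨g x, hy⟩ - q.eval (g x)‖ < ε' := hqy ⟨g x, hy⟩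
            have hhn : ‖h ⟨g x, hy⟩‖ ≤ 1 := by
              simp only [hh, ContinuousMap.coe_mk, Complex.norm_real]
              rw [Real.norm_eq_abs, abs_of_nonneg (le_max_left _ _)]
              apply max_le (by norm_num)
              have : 0 ≤ ‖g x - t‖ / δ := by positivity
              linarith
            by_cases hxδ : ‖g x - t‖ < δ
            · have h8 : ‖q.eval (g x)‖ ≤ 1 + ε' := by
                have := norm_le_aux (q.eval (g x)) (h ⟨g x, hy⟩)
                rw [norm_sub_rev] at this
                linarith
              have h9 : ‖eval (x : Fin n → ℂ) p‖ * ‖q.eval (g x)‖ ≤ (M + ε/2) * (1 + ε') :=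
                mul_le_mul (hδ x hxδ) h8 (norm_nonneg _) (by linarith)
              nlinarith [mul_nonneg hN0 hε'0.le]
            · have hh0 : h ⟨g x, hy⟩ = 0 := by
                simp only [hh, ContinuousMap.coe_mk]
                norm_cast
                apply max_eq_left
                rw [sub_nonpos, le_div_iff₀ hδ0, one_mul]
                exact not_lt.mp hxδ
              have h9 : ‖q.eval (g x)‖ ≤ ε' := by
                rw [hh0, zero_sub, norm_neg] at hqx
                exact hqx.le
              have h10 : ‖eval (x : Fin n → ℂ) p‖ * ‖q.eval (g x)‖ ≤ N * ε' :=
                mul_le_mul (hNx x) h9 (norm_nonneg _) hN0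
              nlinarith [mul_nonneg (by linarith : (0:ℝ) ≤ M + ε/2) (by linarith : (0:ℝ) ≤ 1 + ε')]
          have hkeyp := keyB p q _ hCb
          have h10 : ‖eval z p‖ * (1 - ε') ≤ (M + ε/2) * (1 + ε') + N * ε' :=
            le_trans (mul_le_mul_of_nonneg_left hqt (norm_nonneg _)) hkeyp
          have h11 : ε' * (8 * (M + N + ε + 1)) ≤ ε := by
            rw [← le_div_iff₀ (by positivity)]
            exact hε'small
          nlinarith [norm_nonneg (eval z p), mul_nonneg hε'0.le (norm_nonneg (eval z p))]
        rw [hfib t] at hzF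
        exact hXfib t hzF
      · -- t is not a value of g : contradiction
        exfalso
        have hYne : (Set.range g).Nonempty := ⟨g ⟨x₀X, hx₀X⟩, Set.mem_range_self _⟩
        have hYc : IsCompact (Set.range g) := isCompact_range g.continuous
        haveI : CompactSpace (Set.range g) := isCompact_iff_compactSpace.mp hYc
        set R := sSup ((fun y => ‖y - t‖) '' Set.range g) with hR
        have hRy : ∀ y : Set.range g, ‖(y : ℂ) - t‖ ≤ R := fun y =>
          le_csSup (hYc.bddAbove_image
            ((continuous_id.sub continuous_const).norm.continuousOn)) ⟨y, y.2, rfl⟩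
        have hR0 : 0 ≤ R := (norm_nonneg _).trans (hRy ⟨_, hYne.some_mem⟩)
        set ε₀ := 1 / (2 * (R + 1)) with hε₀def
        have hε₀ : 0 < ε₀ := by positivity
        set f₀ : C(Set.range g, ℂ) :=
          ⟨fun y => ((y : ℂ) - t)⁻¹,
            Continuous.inv₀ (continuous_subtype_val.sub continuous_const)
              (fun y => sub_ne_zero.mpr (fun he => htY (he ▸ y.2)))⟩ with hf₀def
        have hf₀ : f₀ ∈ polyAlg1 (Set.range g) := by rw [hgX]; trivial
        obtain ⟨f, ⟨q', hq'⟩, hdist⟩ := Metric.mem_closure_iff.mp hf₀ ε₀ hε₀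
        have hq'y : ∀ y : Set.range g, ‖((y : ℂ) - t)⁻¹ - q'.eval (y : ℂ)‖ < ε₀ := by
          intro y
          have h1 : dist (f₀ y) (f y) ≤ dist f₀ f := ContinuousMap.dist_apply_le_dist y
          rw [hq' y] at h1
          have h2 : f₀ y = ((y : ℂ) - t)⁻¹ := rfl
          rw [← dist_eq_norm, ← h2]
          exact h1.trans_lt hdist
        have hqt : (q' * (Polynomial.X - Polynomial.C t) - 1).eval t = -1 := by
          simp only [Polynomial.eval_sub, Polynomial.eval_mul, Polynomial.eval_X,
            Polynomial.eval_C, Polynomial.eval_one, sub_self, mul_zero, zero_sub]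
        have hCb : ∀ x : X, ‖eval (x : Fin n → ℂ) (1 : MvPolynomial (Fin n) ℂ)‖ *
            ‖(q' * (Polynomial.X - Polynomial.C t) - 1).eval (g x)‖ ≤ 1/2 := by
          intro x
          rw [map_one, norm_one, one_mul]
          have hy : g x ∈ Set.range g := Set.mem_range_self x
          have hne : g x - t ≠ 0 := sub_ne_zero.mpr (fun he => htY (he ▸ hy))
          have heq : (q' * (Polynomial.X - Polynomial.C t) - 1).eval (g x)
              = (q'.eval (g x) - (g x - t)⁻¹) * (g x - t) := by
            simp only [Polynomial.eval_sub, Polynomial.eval_mul, Polynomial.eval_X,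
              Polynomial.eval_C, Polynomial.eval_one]
            field_simp
          rw [heq, norm_mul]
          have h1 : ‖q'.eval (g x) - (g x - t)⁻¹‖ < ε₀ := by
            rw [norm_sub_rev]
            exact hq'y ⟨g x, hy⟩
          have h2 : ‖g x - t‖ ≤ R := hRy ⟨g x, hy⟩
          calc ‖q'.eval (g x) - (g x - t)⁻¹‖ * ‖g x - t‖ ≤ ε₀ * R :=
                mul_le_mul h1.le h2 (norm_nonneg _) hε₀.le
            _ ≤ 1/2 := by
                rw [hε₀def]
                rw [div_mul_eq_mul_div, one_mul, div_le_div_iff₀ (by positivity) (by norm_num)]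
                linarith
        have hcontra := keyB 1 (q' * (Polynomial.X - Polynomial.C t) - 1) (1/2) hCb
        rw [map_one, norm_one, one_mul, hqt] at hcontra
        norm_num at hcontra
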